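/- Let R₂(y₁, y₂; y₃) = (2y₃ - y₁ - y₂)/((y₂ - y₁)√((y₃ - y₁)(y₃ - y₂))) on {y₁ < y₂ < y₃}. Then R₂ satisfies the second-order PDE ((3/2)∂²_{y₁y₁} + (2/(y₂ - y₁))∂_{y₂} + (2/(y₃ - y₁))∂_{y₃} - 1/(y₂ - y₁)² - (1/8)·1/(y₃ - y₁)²) R₂ = 0 at every point of the simplex {y₁ < y₂ < y₃}. -/

import Mathlib

open Real Set

/-- The Ising partition function `R₂(y₁,y₂;y₃)`. -/
noncomputable def R2 (y₁ y₂ y₃ : ℝ) : ℝ :=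
  (2 * y₃ - y₁ - y₂) / ((y₂ - y₁) * Real.sqrt ((y₃ - y₁) * (y₃ - y₂)))

set_option maxHeartbeats 2000000 in
theorem stmt11 (y₁ y₂ y₃ : ℝ) (h12 : y₁ < y₂) (h23 : y₂ < y₃) :
    (3 / 2) * deriv (fun s => deriv (fun r => R2 r y₂ y₃) s) y₁ +
        (2 / (y₂ - y₁)) * deriv (fun s => R2 y₁ s y₃) y₂ +
        (2 / (y₃ - y₁)) * deriv (fun s => R2 y₁ y₂ s) y₃ -
        (1 / (y₂ - y₁) ^ 2) * R2 y₁ y₂ y₃ -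
        (1 / 8) * (1 / (y₃ - y₁) ^ 2) * R2 y₁ y₂ y₃ = 0 := by
  set p : ℝ := -(1/2) with hp
  have h21 : y₂ - y₁ ≠ 0 := sub_ne_zero.2 h12.ne'
  have h31 : y₃ - y₁ ≠ 0 := sub_ne_zero.2 (h12.trans h23).ne'
  have h32 : y₃ - y₂ ≠ 0 := sub_ne_zero.2 h23.ne'
  have hVpos : (0:ℝ) < (y₃ - y₁) * (y₃ - y₂) :=
    mul_pos (by linarith) (by linarith)
  have hVne : (y₃ - y₁) * (y₃ - y₂) ≠ 0 := hVpos.ne'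
  -- generic rewriting of R2 into rpow form
  have key : ∀ a b c : ℝ, a < c → b < c →
      (2 * c - a - b) / ((b - a) * Real.sqrt ((c - a) * (c - b)))
        = (2 * c - a - b) * ((b - a)⁻¹ * ((c - a) * (c - b)) ^ p) := by
    intro a b c hac hbc
    have hv : (0:ℝ) < (c - a) * (c - b) := mul_pos (by linarith) (by linarith)
    rw [hp, Real.rpow_neg hv.le, ← Real.sqrt_eq_rpow, div_eq_mul_inv, mul_inv]
  -- ### variable 1 : second derivative
  set F : ℝ → ℝ := fun r =>
    (2 * y₃ - r - y₂) * ((y₂ - r)⁻¹ * ((y₃ - r) * (y₃ - y₂)) ^ p) with hFdef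
  set F1 : ℝ → ℝ := fun r =>
    -1 * ((y₂ - r)⁻¹ * ((y₃ - r) * (y₃ - y₂)) ^ p)
    + (2 * y₃ - r - y₂) *
      (-(-1) / (y₂ - r) ^ 2 * ((y₃ - r) * (y₃ - y₂)) ^ p
       + (y₂ - r)⁻¹ * (-1 * (y₃ - y₂) * p * ((y₃ - r) * (y₃ - y₂)) ^ (p - 1))) with hF1def
  have hFd : ∀ r ∈ Iio y₂, HasDerivAt F (F1 r) r := by
    intro r hr
    simp only [mem_Iio] at hr
    have hr2 : y₂ - r ≠ 0 := sub_ne_zero.2 (ne_of_gt hr)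
    have hvne : (y₃ - r) * (y₃ - y₂) ≠ 0 :=
      (mul_pos (by linarith) (by linarith)).ne'
    have hc1 : HasDerivAt (fun r : ℝ => y₂ - r) (-1) r := (hasDerivAt_id r).const_sub y₂
    have hA : HasDerivAt (fun r : ℝ => 2 * y₃ - r - y₂) (-1) r :=
      ((hasDerivAt_id r).const_sub (2 * y₃)).sub_const y₂
    have hv : HasDerivAt (fun r : ℝ => (y₃ - r) * (y₃ - y₂)) (-1 * (y₃ - y₂)) r :=
      ((hasDerivAt_id r).const_sub y₃).mul_const (y₃ - y₂)
    exact hA.mul ((hc1.inv hr2).mul (hv.rpow_const (Or.inl hvne)))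
  have heq1 : (fun r => R2 r y₂ y₃) =ᶠ[nhds y₁] F :=
    Filter.eventuallyEq_of_mem (Iio_mem_nhds h12) fun r hr => by
      simp only [mem_Iio] at hr
      simp only [R2, hFdef]
      exact key r y₂ y₃ (hr.trans h23) h23
  have heqd : deriv (fun r => R2 r y₂ y₃) =ᶠ[nhds y₁] F1 :=
    heq1.deriv.trans <| Filter.eventuallyEq_of_mem (Iio_mem_nhds h12)
      fun r hr => (hFd r hr).deriv
  -- differentiate F1 at y₁
  have hc1 : HasDerivAt (fun r : ℝ => y₂ - r) (-1) y₁ := (hasDerivAt_id y₁).const_sub y₂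
  have hA : HasDerivAt (fun r : ℝ => 2 * y₃ - r - y₂) (-1) y₁ :=
    ((hasDerivAt_id y₁).const_sub (2 * y₃)).sub_const y₂
  have hv : HasDerivAt (fun r : ℝ => (y₃ - r) * (y₃ - y₂)) (-1 * (y₃ - y₂)) y₁ :=
    ((hasDerivAt_id y₁).const_sub y₃).mul_const (y₃ - y₂)
  have hP : HasDerivAt (fun r : ℝ => (y₂ - r)⁻¹) (-(-1) / (y₂ - y₁) ^ 2) y₁ :=
    hc1.inv h21
  have hW : HasDerivAt (fun r : ℝ => ((y₃ - r) * (y₃ - y₂)) ^ p)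
      (-1 * (y₃ - y₂) * p * ((y₃ - y₁) * (y₃ - y₂)) ^ (p - 1)) y₁ :=
    hv.rpow_const (Or.inl hVne)
  have hW1 : HasDerivAt (fun r : ℝ => ((y₃ - r) * (y₃ - y₂)) ^ (p - 1))
      (-1 * (y₃ - y₂) * (p - 1) * ((y₃ - y₁) * (y₃ - y₂)) ^ (p - 1 - 1)) y₁ :=
    hv.rpow_const (Or.inl hVne)
  have hsq : HasDerivAt (fun r : ℝ => (y₂ - r) ^ 2)
      ((2:ℕ) * (y₂ - y₁) ^ (2 - 1) * (-1)) y₁ := hc1.pow 2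
  have hQ := (hasDerivAt_const y₁ (-(-1):ℝ)).div hsq (pow_ne_zero 2 h21)
  have hF1 : HasDerivAt F1 _ y₁ :=
    ((hP.mul hW).const_mul (-1:ℝ)).add
      (hA.mul ((hQ.mul hW).add (hP.mul (hW1.const_mul (-1 * (y₃ - y₂) * p)))))
  have e1 : deriv (fun s => deriv (fun r => R2 r y₂ y₃) s) y₁ = deriv F1 y₁ :=
    heqd.deriv_eq
  -- ### variable 2 : first derivative
  set G : ℝ → ℝ := fun s =>
    (2 * y₃ - y₁ - s) * ((s - y₁)⁻¹ * ((y₃ - y₁) * (y₃ - s)) ^ p) with hGdef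
  have heq2 : (fun s => R2 y₁ s y₃) =ᶠ[nhds y₂] G :=
    Filter.eventuallyEq_of_mem (Ioo_mem_nhds h12 h23) fun s hs => by
      simp only [mem_Ioo] at hs
      simp only [R2, hGdef]
      exact key y₁ s y₃ (h12.trans h23) hs.2
  have hA2 : HasDerivAt (fun s : ℝ => 2 * y₃ - y₁ - s) (-1) y₂ :=
    (hasDerivAt_id y₂).const_sub (2 * y₃ - y₁)
  have hB2 : HasDerivAt (fun s : ℝ => (s - y₁)⁻¹) (-1 / (y₂ - y₁) ^ 2) y₂ :=
    ((hasDerivAt_id y₂).sub_const y₁).inv h21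
  have hv2 : HasDerivAt (fun s : ℝ => (y₃ - y₁) * (y₃ - s)) ((y₃ - y₁) * -1) y₂ :=
    ((hasDerivAt_id y₂).const_sub y₃).const_mul (y₃ - y₁)
  have hG : HasDerivAt G _ y₂ :=
    hA2.mul (hB2.mul (hv2.rpow_const (Or.inl hVne)))
  have e2 : deriv (fun s => R2 y₁ s y₃) y₂ = _ := heq2.deriv_eq.trans hG.deriv
  -- ### variable 3 : first derivative
  set H : ℝ → ℝ := fun t =>
    (2 * t - y₁ - y₂) * ((y₂ - y₁)⁻¹ * ((t - y₁) * (t - y₂)) ^ p) with hHdef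
  have heq3 : (fun t => R2 y₁ y₂ t) =ᶠ[nhds y₃] H :=
    Filter.eventuallyEq_of_mem (Ioi_mem_nhds h23) fun t ht => by
      simp only [mem_Ioi] at ht
      simp only [R2, hHdef]
      exact key y₁ y₂ t (h12.trans ht) ht
  have hA3 : HasDerivAt (fun t : ℝ => 2 * t - y₁ - y₂) (2 * 1 - 0 - 0) y₃ := by
    simpa using (((hasDerivAt_id y₃).const_mul 2).sub_const y₁).sub_const y₂
  have hv3 : HasDerivAt (fun t : ℝ => (t - y₁) * (t - y₂))
      (1 * (y₃ - y₂) + (y₃ - y₁) * 1) y₃ :=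
    ((hasDerivAt_id y₃).sub_const y₁).mul ((hasDerivAt_id y₃).sub_const y₂)
  have hH : HasDerivAt H _ y₃ :=
    hA3.mul ((hv3.rpow_const (Or.inl hVne)).const_mul ((y₂ - y₁)⁻¹))
  have e3 : deriv (fun s => R2 y₁ y₂ s) y₃ = _ := heq3.deriv_eq.trans hH.deriv
  -- ### put it together
  have hR2 : R2 y₁ y₂ y₃ = (2 * y₃ - y₁ - y₂) * ((y₂ - y₁)⁻¹ * ((y₃ - y₁) * (y₃ - y₂)) ^ p) := by
    simp only [R2]; exact key y₁ y₂ y₃ (h12.trans h23) h23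
  have hVp1 : ((y₃ - y₁) * (y₃ - y₂)) ^ (p - 1)
      = ((y₃ - y₁) * (y₃ - y₂)) ^ p / ((y₃ - y₁) * (y₃ - y₂)) := by
    rw [Real.rpow_sub hVpos, Real.rpow_one]
  have hVp2 : ((y₃ - y₁) * (y₃ - y₂)) ^ (p - 1 - 1)
      = ((y₃ - y₁) * (y₃ - y₂)) ^ p / ((y₃ - y₁) * (y₃ - y₂)) ^ 2 := by
    rw [show p - 1 - 1 = p - 2 by ring, Real.rpow_sub hVpos, Real.rpow_two]
  obtain ⟨w, hw⟩ : ∃ w, ((y₃ - y₁) * (y₃ - y₂)) ^ p = w := ⟨_, rfl⟩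
  have e2' : deriv (fun s => R2 y₁ s y₃) y₂
      = w * (-(y₂ - y₁) - (2 * y₃ - y₁ - y₂)
          + (y₂ - y₁) * (2 * y₃ - y₁ - y₂) / (2 * (y₃ - y₂))) / (y₂ - y₁) ^ 2 := by
    rw [e2, hVp1, hw, hp]
    field_simp
    ring
  have e3' : deriv (fun s => R2 y₁ y₂ s) y₃
      = w * (2 * ((y₃ - y₁) * (y₃ - y₂)) - (2 * y₃ - y₁ - y₂) ^ 2 / 2)
          / ((y₂ - y₁) * ((y₃ - y₁) * (y₃ - y₂))) := by
    rw [e3, hVp1, hw, hp]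
    field_simp
    ring
  have e1' : deriv (fun s => deriv (fun r => R2 r y₂ y₃) s) y₁
      = w * ((-(y₃ - y₂) * (y₃ - y₁ + (y₃ - y₂) - (y₂ - y₁))
              - (y₃ - y₂) / 2 * ((y₂ - y₁) + (y₃ - y₁) + (y₃ - y₂)))
              * (y₂ - y₁) * (y₃ - y₁) * (y₃ - y₂)
            + ((y₃ - y₁ + (y₃ - y₂) - (y₂ - y₁)) * (y₃ - y₁) * (y₃ - y₂)
              + (y₃ - y₁ + (y₃ - y₂)) * (y₂ - y₁) * (y₃ - y₂) / 2)
              * (y₃ - y₂) * (2 * (y₃ - y₁) + 3 / 2 * (y₂ - y₁)))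
          / ((y₂ - y₁) ^ 3 * (y₃ - y₁) ^ 2 * (y₃ - y₂) ^ 2) := by
    rw [e1, hF1.deriv, hVp1, hVp2, hw, hp]
    simp only [Pi.div_apply]
    field_simp
    ring
  have hR2' : R2 y₁ y₂ y₃ = w * (2 * y₃ - y₁ - y₂) / (y₂ - y₁) := by
    rw [hR2, hw]; ring
  rw [e1', e2', e3', hR2']
  field_simp
  ring
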